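/- arXiv:2509.04774 — 2 statements merged into one kernel-verified Lean document; each statement's English description precedes it below -/
import Mathlib

section
/- Let G_ω be an increasing weighted tree, let C ≠ V(G) be a vertex cover of G, let S = V(G)∖C, and write N_G(S) = {r_1,…,r_k}. For each i let T^i denote the connected component of G_S containing r_i. Then C is a strong vertex cover of G_ω if and only if G_S has exactly k connected components, namely T^1,…,T^k. Moreover, if C is a strong vertex cover, then each (T^i_ω, r_i) is an increasing weighted tree and s(C) = Σ_{i=1}^k s(r_i, T^i_ω). -/
open SimpleGraph

noncomputable section

variable {V : Type*}

/-- `p 0, p 1, …, p k` is a simple path in `G`: the vertices are pairwise distinct and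
consecutive vertices are adjacent. -/
def IsSimplePathOn (G : SimpleGraph V) (p : ℕ → V) (k : ℕ) : Prop :=
  (∀ i ≤ k, ∀ j ≤ k, p i = p j → i = j) ∧ ∀ i < k, G.Adj (p i) (p (i + 1))

/-- The path `p 0, …, p k` is increasing for the weight `ω`. -/
def IsIncreasingPath (ω : V → V → ℕ) (p : ℕ → V) (k : ℕ) : Prop :=
  ∀ i, i + 2 ≤ k → ω (p i) (p (i + 1)) ≤ ω (p (i + 1)) (p (i + 2))

/-- A leaf is a vertex of degree one. -/
def IsLeafVertex (G : SimpleGraph V) (x : V) : Prop := ∃! y, G.Adj x y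

/-- `(G_ω, v)` is an increasing weighted tree with root `v`: `G` is a tree and every
simple path from a leaf to `v` is increasing. -/
def IsIncreasingWeightedTree (G : SimpleGraph V) (ω : V → V → ℕ) (v : V) : Prop :=
  G.IsTree ∧ ∀ (p : ℕ → V) (k : ℕ), IsSimplePathOn G p k → IsLeafVertex G (p 0) → p k = v →
    IsIncreasingPath ω p k

/-- `S` is an independent set of `G`. -/
def IsIndepSetOn (G : SimpleGraph V) (S : Set V) : Prop :=
  ∀ a ∈ S, ∀ b ∈ S, ¬ G.Adj a b

/-- `N_G(S)`, the neighbourhood of the set `S`. -/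
def setNbhd (G : SimpleGraph V) (S : Set V) : Set V :=
  {u | u ∉ S ∧ ∃ z ∈ S, G.Adj u z}

/-- `ν_S(u) = min { ω(uz) ∣ z ∈ S ∩ N_G(u) }`. -/
def nuWt (G : SimpleGraph V) (ω : V → V → ℕ) (S : Set V) (u : V) : ℕ :=
  sInf {w | ∃ z ∈ S, G.Adj u z ∧ w = ω u z}

/-- The graph `G_S`: its vertices are those outside `S`, its edges are those of `G ∖ S`
except that every edge `uz` with `u ∈ N_G(S)` and `ω(uz) ≥ ν_S(u)` is removed. -/
def GSgraph (G : SimpleGraph V) (ω : V → V → ℕ) (S : Set V) : SimpleGraph V where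
  Adj a b := G.Adj a b ∧ a ∉ S ∧ b ∉ S ∧
    (a ∈ setNbhd G S → ω a b < nuWt G ω S a) ∧
    (b ∈ setNbhd G S → ω b a < nuWt G ω S b)
  symm := by
    constructor
    rintro a b ⟨h1, h2, h3, h4, h5⟩
    exact ⟨h1.symm, h3, h2, h5, h4⟩
  loopless := by
    constructor
    rintro a ⟨h, -⟩
    exact G.loopless.irrefl a h

/-- `C` is a vertex cover of `G`. -/
def IsVertexCoverOn (G : SimpleGraph V) (C : Set V) : Prop :=
  ∀ a b, G.Adj a b → a ∈ C ∨ b ∈ C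

/-- `C` is a minimal vertex cover of `G`. -/
def IsMinimalVertexCover (G : SimpleGraph V) (C : Set V) : Prop :=
  IsVertexCoverOn G C ∧ ∀ C' ⊆ C, IsVertexCoverOn G C' → C' = C

/-- A path `p 0 → ⋯ → p m` as in the definition of a strong vertex cover (with `S` the
complement of the cover): it avoids `N_G(S)` except at the last vertex `x = p m ∈ N_G(S)`,
and `ω(p (m-1), x) < ν_S(x)`. -/
def IsStrongWitnessPath (G : SimpleGraph V) (ω : V → V → ℕ) (S : Set V)
    (p : ℕ → V) (m : ℕ) : Prop :=
  IsSimplePathOn G p m ∧ 1 ≤ m ∧ (∀ i < m, p i ∉ setNbhd G S) ∧ p m ∈ setNbhd G S ∧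
    ω (p (m - 1)) (p m) < nuWt G ω S (p m)

/-- `C` is a strong vertex cover of `G_ω`. -/
def IsStrongVertexCover (G : SimpleGraph V) (ω : V → V → ℕ) (C : Set V) : Prop :=
  IsVertexCoverOn G C ∧ C ≠ Set.univ ∧
    (IsMinimalVertexCover G C ∨
      ∀ w ∈ C \ setNbhd G Cᶜ, ∃ (p : ℕ → V) (m : ℕ),
        IsStrongWitnessPath G ω Cᶜ p m ∧ p 0 = w)

/-- `u` is a special vertex of the vertex cover `C`. -/
def IsSpecialVertexOfCover (G : SimpleGraph V) (ω : V → V → ℕ) (C : Set V) (u : V) : Prop :=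
  ∃ (p : ℕ → V) (m : ℕ), IsStrongWitnessPath G ω Cᶜ p m ∧ p 0 ∈ C \ setNbhd G Cᶜ ∧
    2 ≤ m ∧ p 1 = u ∧ ω (p 0) (p 1) = ω (p 1) (p 2)

/-- `s(C)`, the number of special vertices of the cover `C`. -/
def coverSpecialCount (G : SimpleGraph V) (ω : V → V → ℕ) (C : Set V) : ℕ :=
  {u | IsSpecialVertexOfCover G ω C u}.ncard

/-- `w` is a special vertex of the rooted weighted tree `(G_ω, v)`: there is a simple path
`u → w → x → ⋯ → v` ending at `v` with `ω(uw) = ω(wx)`. -/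
def IsSpecialVertexOfRoot (G : SimpleGraph V) (ω : V → V → ℕ) (v w : V) : Prop :=
  ∃ (p : ℕ → V) (m : ℕ), IsSimplePathOn G p m ∧ 2 ≤ m ∧ p m = v ∧ p 1 = w ∧
    ω (p 0) (p 1) = ω (p 1) (p 2)

/-- `s(v, G_ω)`, the number of special vertices of `(G_ω, v)`. -/
def rootSpecialCount (G : SimpleGraph V) (ω : V → V → ℕ) (v : V) : ℕ :=
  {w | IsSpecialVertexOfRoot G ω v w}.ncard

namespace AuxSVC

variable {G : SimpleGraph V} {p : ℕ → V} {k m : ℕ} {ω : V → V → ℕ} {v : V}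


variable {G : SimpleGraph V} {p : ℕ → V} {k : ℕ}

/-- Build a walk from a function with adjacent consecutive values. -/
def toWalk (G : SimpleGraph V) (p : ℕ → V) :
    (k : ℕ) → (∀ i < k, G.Adj (p i) (p (i + 1))) → G.Walk (p 0) (p k)
  | 0, _ => SimpleGraph.Walk.nil
  | k + 1, h =>
      (toWalk G p k fun i hi => h i (hi.trans (Nat.lt_succ_self k))).concat
        (h k (Nat.lt_succ_self k))

lemma toWalk_length (h : ∀ i < k, G.Adj (p i) (p (i + 1))) :
    (toWalk G p k h).length = k := by
  induction k with
  | zero => rfl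
  | succ k ih => simp [toWalk, SimpleGraph.Walk.length_concat, ih]

lemma toWalk_support (h : ∀ i < k, G.Adj (p i) (p (i + 1))) :
    (toWalk G p k h).support = (List.range (k + 1)).map p := by
  induction k with
  | zero => simp [toWalk, List.range_succ]
  | succ k ih =>
      rw [toWalk, SimpleGraph.Walk.support_concat, ih, List.range_succ (n := k + 1)]
      simp [List.concat_eq_append]

lemma toWalk_isPath (hp : IsSimplePathOn G p k) :
    (toWalk G p k hp.2).IsPath := by
  rw [SimpleGraph.Walk.isPath_def, toWalk_support]
  refine List.Nodup.map_on ?_ List.nodup_range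
  intro i hi j hj hij
  exact hp.1 i (by simpa using Nat.lt_succ_iff.mp (List.mem_range.mp hi))
    j (by simpa using Nat.lt_succ_iff.mp (List.mem_range.mp hj)) hij

lemma getVert_mem_support {u v : V} (W : G.Walk u v) (n : ℕ) :
    W.getVert n ∈ W.support := by
  induction W generalizing n with
  | nil => simp [SimpleGraph.Walk.getVert]
  | cons hadj q ih =>
      match n with
      | 0 => simp
      | n + 1 =>
          rw [SimpleGraph.Walk.getVert_cons_succ]
          simp only [SimpleGraph.Walk.support_cons, List.mem_cons]
          exact Or.inr (ih n)

lemma IsPath.getVert_inj {u v : V} {W : G.Walk u v} (hW : W.IsPath) :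
    ∀ i ≤ W.length, ∀ j ≤ W.length, W.getVert i = W.getVert j → i = j := by
  induction W with
  | nil => intro i hi j hj _; simp only [SimpleGraph.Walk.length_nil, Nat.le_zero] at hi hj; omega
  | @cons a b c hadj q ih =>
      intro i hi j hj hij
      have hq : q.IsPath := hW.of_cons
      have ha : a ∉ q.support := (SimpleGraph.Walk.cons_isPath_iff hadj q).mp hW |>.2
      match i, j with
      | 0, 0 => rfl
      | 0, j + 1 =>
          exfalso
          rw [SimpleGraph.Walk.getVert_zero, SimpleGraph.Walk.getVert_cons_succ] at hij
          exact ha (hij ▸ getVert_mem_support q j)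
      | i + 1, 0 =>
          exfalso
          rw [SimpleGraph.Walk.getVert_zero, SimpleGraph.Walk.getVert_cons_succ] at hij
          exact ha (hij ▸ getVert_mem_support q i)
      | i + 1, j + 1 =>
          rw [SimpleGraph.Walk.getVert_cons_succ, SimpleGraph.Walk.getVert_cons_succ] at hij
          simp only [SimpleGraph.Walk.length_cons] at hi hj
          exact congrArg Nat.succ (ih hq i (by omega) j (by omega) hij)

lemma isSimplePathOn_getVert {u v : V} {W : G.Walk u v} (hW : W.IsPath) :
    IsSimplePathOn G (W.getVert) W.length :=
  ⟨IsPath.getVert_inj hW, fun i hi => W.adj_getVert_succ hi⟩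



variable {G : SimpleGraph V} {p : ℕ → V} {k m : ℕ} {ω : V → V → ℕ} {v : V}

lemma isSimplePathOn_mono {t : ℕ} (ht : t ≤ k) (hp : IsSimplePathOn G p k) :
    IsSimplePathOn G p t :=
  ⟨fun i hi j hj hij => hp.1 i (hi.trans ht) j (hj.trans ht) hij,
   fun i hi => hp.2 i (lt_of_lt_of_le hi ht)⟩

lemma no_chord (hT : G.IsTree) (hp : IsSimplePathOn G p k) (hk : 2 ≤ k) :
    ¬ G.Adj (p 0) (p k) := by
  intro h
  have h1 : (toWalk G p k hp.2).IsPath := toWalk_isPath hp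
  have h2 : (SimpleGraph.Path.singleton h : G.Walk (p 0) (p k)).IsPath :=
    (SimpleGraph.Path.singleton h).2
  have := (hT.existsUnique_path (p 0) (p k)).unique h1 h2
  have hl := congrArg SimpleGraph.Walk.length this
  rw [toWalk_length] at hl
  simp [SimpleGraph.Path.singleton] at hl
  omega

lemma increasing_to_root_aux [Fintype V] (hG : IsIncreasingWeightedTree G ω v) (d : ℕ) :
    ∀ (m : ℕ) (p : ℕ → V), Fintype.card V ≤ m + d → IsSimplePathOn G p m → p m = v →
      IsIncreasingPath ω p m := by
  induction d with
  | zero =>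
      intro m p hcard hp _
      exfalso
      have : (Finset.range (m + 1)).card ≤ (Finset.univ : Finset V).card := by
        apply Finset.card_le_card_of_injOn p (fun a _ => Finset.mem_univ _)
        intro a ha b hb hab
        exact hp.1 a (Nat.lt_succ_iff.mp (Finset.mem_range.mp ha))
          b (Nat.lt_succ_iff.mp (Finset.mem_range.mp hb)) hab
      simp only [Finset.card_range, Finset.card_univ] at this
      omega
  | succ d ih =>
      intro m p hcard hp hend
      rcases Nat.eq_zero_or_pos m with hm | hm
      · intro i hi; omega
      by_cases hleaf : IsLeafVertex G (p 0)
      · exact hG.2 p m hp hleaf hend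
      · -- find another neighbour of p 0
        have hadj01 : G.Adj (p 0) (p 1) := hp.2 0 hm
        have hy : ∃ y, G.Adj (p 0) y ∧ y ≠ p 1 := by
          by_contra hcon
          push_neg at hcon
          exact hleaf ⟨p 1, hadj01, fun y hy => hcon y hy⟩
        obtain ⟨y, hyadj, hyne⟩ := hy
        have hynotin : ∀ t ≤ m, y ≠ p t := by
          intro t ht hyt
          subst hyt
          rcases Nat.lt_or_ge t 2 with h2 | h2
          · rcases t with _ | _ | t
            · exact G.loopless.irrefl _ hyadj
            · exact hyne rfl
            · omega
          · exact no_chord hG.1 (isSimplePathOn_mono ht hp) h2 hyadj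
        set p' : ℕ → V := fun s => if s = 0 then y else p (s - 1) with hp'
        have hp'succ : ∀ s : ℕ, p' (s + 1) = p s := fun s => by simp [hp']
        have hp'0 : p' 0 = y := by simp [hp']
        have hsp' : IsSimplePathOn G p' (m + 1) := by
          constructor
          · intro a ha b hb hab
            match a, b with
            | 0, 0 => rfl
            | 0, b + 1 =>
                rw [hp'0, hp'succ] at hab
                exact absurd hab (hynotin b (by omega))
            | a + 1, 0 =>
                rw [hp'0, hp'succ] at hab
                exact absurd hab.symm (hynotin a (by omega))
            | a + 1, b + 1 =>
                rw [hp'succ, hp'succ] at hab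
                exact congrArg Nat.succ (hp.1 a (by omega) b (by omega) hab)
          · intro t ht
            match t with
            | 0 => rw [hp'0, hp'succ]; exact hyadj.symm
            | t + 1 => rw [hp'succ, hp'succ]; exact hp.2 t (by omega)
        have hend' : p' (m + 1) = v := by rw [hp'succ]; exact hend
        have hinc' := ih (m + 1) p' (by omega) hsp' hend'
        intro t ht
        have := hinc' (t + 1) (by omega)
        rwa [hp'succ, hp'succ, hp'succ] at this

lemma increasing_to_root [Fintype V] (hG : IsIncreasingWeightedTree G ω v)
    (hp : IsSimplePathOn G p m) (hend : p m = v) : IsIncreasingPath ω p m :=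
  increasing_to_root_aux hG (Fintype.card V) m p (by omega) hp hend


variable {G : SimpleGraph V} {p : ℕ → V} {k m : ℕ} {ω : V → V → ℕ} {v : V}

lemma no_valley [Fintype V] (hsym : ∀ a b, ω a b = ω b a)
    (hG : IsIncreasingWeightedTree G ω v) (hp : IsSimplePathOn G p m) {i j : ℕ}
    (hij : i < j) (hj : j + 2 ≤ m)
    (hdec : ω (p (i + 1)) (p (i + 2)) < ω (p i) (p (i + 1))) :
    ω (p (j + 1)) (p (j + 2)) ≤ ω (p j) (p (j + 1)) := by
  classical
  have hconn : G.Connected := hG.1.1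
  -- the vertex on the path closest to the root
  obtain ⟨t0, ht0mem, ht0min⟩ :=
    (Finset.range (m + 1)).exists_min_image (fun t => G.dist (p t) v) ⟨0, by simp⟩
  rw [Finset.mem_range, Nat.lt_succ_iff] at ht0mem
  have ht0min' : ∀ t ≤ m, G.dist (p t0) v ≤ G.dist (p t) v := by
    intro t ht
    exact ht0min t (Finset.mem_range.mpr (by omega))
  -- a geodesic from `p t0` to the root
  obtain ⟨W0, hW0len⟩ := (hconn (p t0) v).exists_walk_length_eq_dist
  set W : G.Walk (p t0) v := W0.bypass with hWdef
  have hWpath : W.IsPath := W0.bypass_isPath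
  have hWlen : W.length = G.dist (p t0) v :=
    le_antisymm (hW0len ▸ W0.length_bypass_le) (SimpleGraph.dist_le W)
  -- the geodesic meets the path only at `p t0`
  have hmeet : ∀ s ≤ m, p s ∈ W.support → s = t0 := by
    intro s hs hmem
    obtain ⟨q1, q2, hq⟩ := SimpleGraph.Walk.mem_support_iff_exists_append.mp hmem
    have hd2 : G.dist (p s) v ≤ q2.length := SimpleGraph.dist_le q2
    have hlen : q1.length + q2.length = W.length := by
      rw [hq, SimpleGraph.Walk.length_append]
    have h1 : q1.length = 0 := by
      have := ht0min' s hs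
      omega
    have := SimpleGraph.Walk.eq_of_length_eq_zero h1
    exact hp.1 s hs t0 ht0mem this.symm
  -- ascending part
  have ascend : ∀ t, t + 2 ≤ t0 → ω (p t) (p (t + 1)) ≤ ω (p (t + 1)) (p (t + 2)) := by
    intro t ht
    set P1 : ℕ → V := fun s => if s ≤ t0 then p s else W.getVert (s - t0) with hP1
    have hP1p : ∀ s ≤ t0, P1 s = p s := fun s hs => by simp [hP1, hs]
    have hP1W : ∀ s, t0 ≤ s → P1 s = W.getVert (s - t0) := by
      intro s hs
      rcases eq_or_lt_of_le hs with h | h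
      · subst h; simp [hP1]
      · simp only [hP1]; rw [if_neg (by omega)]
    have hsp : IsSimplePathOn G P1 (t0 + W.length) := by
      constructor
      · intro a ha b hb hab
        by_cases hat : a ≤ t0 <;> by_cases hbt : b ≤ t0
        · rw [hP1p a hat, hP1p b hbt] at hab
          exact hp.1 a (by omega) b (by omega) hab
        · rw [hP1p a hat, hP1W b (by omega)] at hab
          have hmem : p a ∈ W.support := by rw [hab]; exact getVert_mem_support W (b - t0)
          have hat0 : a = t0 := hmeet a (by omega) hmem
          have hb0 : b - t0 = 0 := by
            refine IsPath.getVert_inj hWpath (b - t0) (by omega) 0 (by omega) ?_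
            rw [SimpleGraph.Walk.getVert_zero, ← hab, hat0]
          omega
        · rw [hP1p b hbt, hP1W a (by omega)] at hab
          have hmem : p b ∈ W.support := by rw [← hab]; exact getVert_mem_support W (a - t0)
          have hbt0 : b = t0 := hmeet b (by omega) hmem
          have ha0 : a - t0 = 0 := by
            refine IsPath.getVert_inj hWpath (a - t0) (by omega) 0 (by omega) ?_
            rw [SimpleGraph.Walk.getVert_zero, hab, hbt0]
          omega
        · rw [hP1W a (by omega), hP1W b (by omega)] at hab
          have := IsPath.getVert_inj hWpath (a - t0) (by omega) (b - t0) (by omega) hab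
          omega
      · intro s hs
        rcases Nat.lt_or_ge s t0 with h | h
        · rw [hP1p s (by omega), hP1p (s + 1) (by omega)]
          exact hp.2 s (by omega)
        · rw [hP1W s h, hP1W (s + 1) (by omega)]
          have h1 : s + 1 - t0 = (s - t0) + 1 := by omega
          rw [h1]
          exact W.adj_getVert_succ (by omega)
    have hend : P1 (t0 + W.length) = v := by
      rw [hP1W _ (by omega)]
      have : t0 + W.length - t0 = W.length := by omega
      rw [this, SimpleGraph.Walk.getVert_length]
    have hinc := increasing_to_root hG hsp hend
    have := hinc t (by omega)
    rwa [hP1p t (by omega), hP1p (t + 1) (by omega), hP1p (t + 2) (by omega)] at this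
  -- descending part
  have descend : ∀ s, t0 ≤ s → s + 2 ≤ m →
      ω (p (s + 1)) (p (s + 2)) ≤ ω (p s) (p (s + 1)) := by
    intro s hs hsm
    set P2 : ℕ → V := fun t => if t ≤ m - t0 then p (m - t) else W.getVert (t - (m - t0))
      with hP2
    have hP2p : ∀ t ≤ m - t0, P2 t = p (m - t) := fun t ht => by simp [hP2, ht]
    have hP2W : ∀ t, m - t0 ≤ t → P2 t = W.getVert (t - (m - t0)) := by
      intro t ht
      rcases eq_or_lt_of_le ht with h | h
      · subst h
        simp only [hP2]
        rw [if_pos le_rfl]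
        have h0 : m - t0 - (m - t0) = 0 := by omega
        rw [h0, SimpleGraph.Walk.getVert_zero]
        congr 1
        omega
      · simp only [hP2]; rw [if_neg (by omega)]
    have hsp : IsSimplePathOn G P2 ((m - t0) + W.length) := by
      constructor
      · intro a ha b hb hab
        by_cases hat : a ≤ m - t0 <;> by_cases hbt : b ≤ m - t0
        · rw [hP2p a hat, hP2p b hbt] at hab
          have := hp.1 (m - a) (by omega) (m - b) (by omega) hab
          omega
        · rw [hP2p a hat, hP2W b (by omega)] at hab
          have hmem : p (m - a) ∈ W.support := by
            rw [hab]; exact getVert_mem_support W (b - (m - t0))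
          have hma : m - a = t0 := hmeet (m - a) (by omega) hmem
          have hb0 : b - (m - t0) = 0 := by
            refine IsPath.getVert_inj hWpath (b - (m - t0)) (by omega) 0 (by omega) ?_
            rw [SimpleGraph.Walk.getVert_zero, ← hab, hma]
          omega
        · rw [hP2p b hbt, hP2W a (by omega)] at hab
          have hmem : p (m - b) ∈ W.support := by
            rw [← hab]; exact getVert_mem_support W (a - (m - t0))
          have hmb : m - b = t0 := hmeet (m - b) (by omega) hmem
          have ha0 : a - (m - t0) = 0 := by
            refine IsPath.getVert_inj hWpath (a - (m - t0)) (by omega) 0 (by omega) ?_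
            rw [SimpleGraph.Walk.getVert_zero, hab, hmb]
          omega
        · rw [hP2W a (by omega), hP2W b (by omega)] at hab
          have := IsPath.getVert_inj hWpath (a - (m - t0)) (by omega) (b - (m - t0))
            (by omega) hab
          omega
      · intro t ht
        rcases Nat.lt_or_ge t (m - t0) with h | h
        · rw [hP2p t (by omega), hP2p (t + 1) (by omega)]
          have h1 : m - t = (m - (t + 1)) + 1 := by omega
          rw [h1]
          exact (hp.2 (m - (t + 1)) (by omega)).symm
        · rw [hP2W t h, hP2W (t + 1) (by omega)]
          have h1 : t + 1 - (m - t0) = (t - (m - t0)) + 1 := by omega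
          rw [h1]
          exact W.adj_getVert_succ (by omega)
    have hend : P2 ((m - t0) + W.length) = v := by
      rw [hP2W _ (by omega)]
      have : (m - t0) + W.length - (m - t0) = W.length := by omega
      rw [this, SimpleGraph.Walk.getVert_length]
    have hinc := increasing_to_root hG hsp hend
    have hkey := hinc (m - s - 2) (by omega)
    rw [hP2p (m - s - 2) (by omega), hP2p (m - s - 2 + 1) (by omega),
      hP2p (m - s - 2 + 2) (by omega)] at hkey
    have e1 : m - (m - s - 2) = s + 2 := by omega
    have e2 : m - (m - s - 2 + 1) = s + 1 := by omega
    have e3 : m - (m - s - 2 + 2) = s := by omega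
    rw [e1, e2, e3] at hkey
    calc ω (p (s + 1)) (p (s + 2)) = ω (p (s + 2)) (p (s + 1)) := hsym _ _
      _ ≤ ω (p (s + 1)) (p s) := hkey
      _ = ω (p s) (p (s + 1)) := hsym _ _
  -- conclude
  rcases Nat.lt_or_ge (i + 2) (t0 + 1) with h | h
  · exact absurd (ascend i (by omega)) (by omega)
  · exact descend j (by omega) hj

end AuxSVC

namespace AuxSVC
variable {G : SimpleGraph V} {p : ℕ → V} {k m : ℕ} {ω : V → V → ℕ} {v : V} {C : Set V}

lemma nu_spec {S : Set V} {u : V} (hu : u ∈ setNbhd G S) :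
    ∃ z ∈ S, G.Adj u z ∧ ω u z = nuWt G ω S u := by
  obtain ⟨-, z, hz, hadj⟩ := hu
  have hne : (nuWt G ω S u) ∈ {w | ∃ z ∈ S, G.Adj u z ∧ w = ω u z} :=
    Nat.sInf_mem ⟨ω u z, z, hz, hadj, rfl⟩
  obtain ⟨z', hz', hadj', heq⟩ := hne
  exact ⟨z', hz', hadj', heq.symm⟩

lemma nu_le {S : Set V} {u z : V} (hz : z ∈ S) (hadj : G.Adj u z) :
    nuWt G ω S u ≤ ω u z := Nat.sInf_le ⟨z, hz, hadj, rfl⟩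

/-- Vertices of a strong witness path lie in the cover. -/
lemma witness_not_mem (hsym : ∀ a b, ω a b = ω b a) (hC : IsVertexCoverOn G C)
    (hw : IsStrongWitnessPath G ω Cᶜ p m) : ∀ i ≤ m, p i ∉ (Cᶜ : Set V) := by
  intro i hi hiS
  rcases eq_or_lt_of_le hi with h | h
  · subst h; exact hw.2.2.2.1.1 hiS
  · have hadj := hw.1.2 i h
    by_cases him : i + 1 = m
    · have hnb : p m ∈ setNbhd G Cᶜ := hw.2.2.2.1
      have h1 : nuWt G ω Cᶜ (p m) ≤ ω (p m) (p i) := by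
        refine nu_le hiS ?_
        rw [← him]; exact hadj.symm
      have h2 : ω (p (m - 1)) (p m) < nuWt G ω Cᶜ (p m) := hw.2.2.2.2
      have h3 : m - 1 = i := by omega
      rw [h3, hsym (p i) (p m)] at h2
      omega
    · have hn1 : p (i + 1) ∉ setNbhd G Cᶜ := hw.2.2.1 (i + 1) (by omega)
      by_cases hc : p (i + 1) ∈ (Cᶜ : Set V)
      · rcases hC (p i) (p (i + 1)) hadj with h | h
        · exact hiS h
        · exact hc h
      · exact hn1 ⟨hc, p i, hiS, hadj.symm⟩

/-- A strong witness path is a path in `G_S`. -/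
lemma witness_GS (hsym : ∀ a b, ω a b = ω b a) (hC : IsVertexCoverOn G C)
    (hw : IsStrongWitnessPath G ω Cᶜ p m) :
    ∀ i < m, (GSgraph G ω Cᶜ).Adj (p i) (p (i + 1)) := by
  intro i h
  refine ⟨hw.1.2 i h, witness_not_mem hsym hC hw i (by omega),
    witness_not_mem hsym hC hw (i + 1) (by omega), ?_, ?_⟩
  · intro hmem; exact absurd hmem (hw.2.2.1 i h)
  · intro hmem
    by_cases him : i + 1 = m
    · have h2 := hw.2.2.2.2
      have h3 : m - 1 = i := by omega
      rw [h3] at h2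
      rw [him, hsym]
      exact h2
    · exact absurd hmem (hw.2.2.1 (i + 1) (by omega))

lemma reach_of_chain {H : SimpleGraph V} {m : ℕ} {p : ℕ → V}
    (h : ∀ i < m, H.Adj (p i) (p (i + 1))) {t : ℕ} (ht : t ≤ m) :
    H.Reachable (p t) (p m) := by
  have hadj : ∀ i < m - t, H.Adj ((fun s => p (t + s)) i) ((fun s => p (t + s)) (i + 1)) := by
    intro i hi
    simp only []
    have e : t + (i + 1) = (t + i) + 1 := by omega
    rw [e]
    exact h (t + i) (by omega)
  have W := toWalk H (fun s => p (t + s)) (m - t) hadj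
  have e0 : t + 0 = t := by omega
  have e1 : t + (m - t) = m := by omega
  rw [e0, e1] at W
  exact ⟨W⟩

lemma minimal_subset_nbhd (hmin : IsMinimalVertexCover G C) :
    ∀ x ∈ C, x ∈ setNbhd G Cᶜ := by
  intro x hx
  have hnc : ¬ IsVertexCoverOn G (C \ {x}) := by
    intro hcv
    have h := hmin.2 (C \ {x}) Set.diff_subset hcv
    rw [← h] at hx
    exact hx.2 rfl
  simp only [IsVertexCoverOn, not_forall] at hnc
  obtain ⟨a, b, hadj, hab⟩ := hnc
  push_neg at hab
  obtain ⟨ha, hb⟩ := hab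
  rcases hmin.1 a b hadj with h | h
  · have hax : a = x := by
      by_contra hne
      exact ha ⟨h, hne⟩
    have hbnc : b ∉ C := by
      intro hbC
      have : b = x := by by_contra hne; exact hb ⟨hbC, hne⟩
      rw [hax, this] at hadj
      exact G.loopless.irrefl _ hadj
    subst hax
    exact ⟨fun hc => hc hx, b, hbnc, hadj⟩
  · have hbx : b = x := by
      by_contra hne
      exact hb ⟨h, hne⟩
    have hanc : a ∉ C := by
      intro haC
      have : a = x := by by_contra hne; exact ha ⟨haC, hne⟩
      rw [hbx, this] at hadj
      exact G.loopless.irrefl _ hadj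
    subst hbx
    exact ⟨fun hc => hc hx, a, hanc, hadj.symm⟩



/-- Vertices on a `G_S` walk are outside `S`. -/
lemma GS_getVert_not_mem {S : Set V} {x y : V} {W : (GSgraph G ω S).Walk x y}
    (hx : x ∉ S) : ∀ s, W.getVert s ∉ S := by
  intro s
  rcases Nat.eq_zero_or_pos s with h | h
  · subst h; rwa [SimpleGraph.Walk.getVert_zero]
  rcases Nat.lt_or_ge s W.length with hs | hs
  · have := W.adj_getVert_succ (i := s - 1) (by omega)
    have e : s - 1 + 1 = s := by omega
    rw [e] at this
    exact this.2.2.1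
  · rcases Nat.eq_zero_or_pos W.length with h0 | h0
    · rw [SimpleGraph.Walk.getVert_of_length_le W hs]
      exact (SimpleGraph.Walk.eq_of_length_eq_zero h0) ▸ hx
    · have := W.adj_getVert_succ (i := W.length - 1) (by omega)
      have e : W.length - 1 + 1 = W.length := by omega
      rw [e] at this
      rw [SimpleGraph.Walk.getVert_of_length_le W hs, ← SimpleGraph.Walk.getVert_length W]
      exact this.2.2.1

/-- Two distinct vertices of `N_G(S)` are not connected in `G_S`. -/
lemma nbhd_not_reachable [Fintype V] (hsym : ∀ a b, ω a b = ω b a)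
    (hG : IsIncreasingWeightedTree G ω v) {x y : V}
    (hx : x ∈ setNbhd G Cᶜ) (hy : y ∈ setNbhd G Cᶜ) (hxy : x ≠ y) :
    ¬ (GSgraph G ω Cᶜ).Reachable x y := by
  intro hreach
  classical
  obtain ⟨W0⟩ := hreach
  set W : (GSgraph G ω Cᶜ).Walk x y := W0.bypass with hW
  have hWp : W.IsPath := W0.bypass_isPath
  set t : ℕ := W.length with htdef
  have hq : IsSimplePathOn (GSgraph G ω Cᶜ) W.getVert t := isSimplePathOn_getVert hWp
  have hq0 : W.getVert 0 = x := W.getVert_zero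
  have hqt : W.getVert t = y := W.getVert_length
  have ht1 : 1 ≤ t := by
    rcases Nat.eq_zero_or_pos t with h | h
    · exfalso
      have h2 := hqt
      rw [h, hq0] at h2
      exact hxy h2
    · exact h
  have hqn : ∀ s, W.getVert s ∉ (Cᶜ : Set V) := GS_getVert_not_mem hx.1
  obtain ⟨z1, hz1S, hz1adj, hz1nu⟩ := nu_spec (ω := ω) hx
  obtain ⟨z2, hz2S, hz2adj, hz2nu⟩ := nu_spec (ω := ω) hy
  -- z1 ≠ z2, else a cycle in the tree
  have hz12 : z1 ≠ z2 := by
    intro he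
    subst he
    -- path x = q 0, ..., q t = y, then z1, contradicting no chord
    set Q : ℕ → V := fun s => if s ≤ t then W.getVert s else z1 with hQ
    have hQq : ∀ s ≤ t, Q s = W.getVert s := fun s hs => by simp only [hQ]; rw [if_pos hs]
    have hQl : Q (t + 1) = z1 := by simp [hQ]
    have hsp : IsSimplePathOn G Q (t + 1) := by
      constructor
      · intro a ha b hb hab
        by_cases hat : a ≤ t <;> by_cases hbt : b ≤ t
        · rw [hQq a hat, hQq b hbt] at hab
          exact IsPath.getVert_inj hWp a hat b hbt hab
        · have hbe : b = t + 1 := by omega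
          rw [hQq a hat, hbe, hQl] at hab
          exact absurd (hab ▸ hz1S) (hqn a)
        · have hae : a = t + 1 := by omega
          rw [hQq b hbt, hae, hQl] at hab
          exact absurd (hab.symm ▸ hz1S) (hqn b)
        · omega
      · intro s hs
        rcases Nat.lt_or_ge s t with h | h
        · rw [hQq s (by omega), hQq (s + 1) (by omega)]
          exact (W.adj_getVert_succ h).1
        · have hse : s = t := by omega
          rw [hse, hQq t le_rfl, hQl, hqt]
          exact hz2adj
    have := no_chord hG.1 hsp (by omega)
    rw [hQq 0 (by omega), hq0, hQl] at this
    exact this hz1adj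
  -- the two-sided extension
  set P : ℕ → V := fun s => if s = 0 then z1 else if s ≤ t + 1 then W.getVert (s - 1) else z2
    with hP
  have hP0 : P 0 = z1 := by simp [hP]
  have hPs : ∀ s ≤ t, P (s + 1) = W.getVert s := by
    intro s hs
    simp only [hP]
    rw [if_neg (by omega), if_pos (by omega)]
    congr 1
  have hPl : P (t + 2) = z2 := by
    simp only [hP]
    rw [if_neg (by omega), if_neg (by omega)]
  have hsp : IsSimplePathOn G P (t + 2) := by
    constructor
    · intro a ha b hb hab
      have hca : a = 0 ∨ a = t + 2 ∨ (1 ≤ a ∧ a ≤ t + 1) := by omega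
      have hcb : b = 0 ∨ b = t + 2 ∨ (1 ≤ b ∧ b ≤ t + 1) := by omega
      rcases hca with ha0 | hal | ⟨ha1, ha2⟩ <;> rcases hcb with hb0 | hbl | ⟨hb1, hb2⟩
      · omega
      · exfalso
        rw [ha0, hbl, hP0, hPl] at hab
        exact hz12 hab
      · exfalso
        rw [ha0, hP0] at hab
        have eb : b = (b - 1) + 1 := by omega
        rw [eb, hPs (b - 1) (by omega)] at hab
        exact (hqn (b - 1)) (hab ▸ hz1S)
      · exfalso
        rw [hal, hb0, hP0, hPl] at hab
        exact hz12 hab.symm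
      · omega
      · exfalso
        rw [hal, hPl] at hab
        have eb : b = (b - 1) + 1 := by omega
        rw [eb, hPs (b - 1) (by omega)] at hab
        exact (hqn (b - 1)) (hab ▸ hz2S)
      · exfalso
        rw [hb0, hP0] at hab
        have ea : a = (a - 1) + 1 := by omega
        rw [ea, hPs (a - 1) (by omega)] at hab
        exact (hqn (a - 1)) (hab.symm ▸ hz1S)
      · exfalso
        rw [hbl, hPl] at hab
        have ea : a = (a - 1) + 1 := by omega
        rw [ea, hPs (a - 1) (by omega)] at hab
        exact (hqn (a - 1)) (hab.symm ▸ hz2S)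
      · have ea : a = (a - 1) + 1 := by omega
        have eb : b = (b - 1) + 1 := by omega
        rw [ea, hPs (a - 1) (by omega), eb, hPs (b - 1) (by omega)] at hab
        have := IsPath.getVert_inj hWp (a - 1) (by omega) (b - 1) (by omega) hab
        omega
    · intro s hs
      rcases Nat.eq_zero_or_pos s with h0 | h0
      · subst h0
        rw [hP0, hPs 0 (by omega), hq0]
        exact hz1adj.symm
      rcases Nat.lt_or_ge s (t + 1) with h1 | h1
      · have ea : s = (s - 1) + 1 := by omega
        rw [ea, hPs (s - 1) (by omega), hPs (s - 1 + 1) (by omega)]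
        exact (W.adj_getVert_succ (by omega)).1
      · have hse : s = t + 1 := by omega
        rw [hse, show t + 1 + 1 = t + 2 by rfl, hPl, hPs t le_rfl, hqt]
        exact hz2adj
  -- decrease at 0, increase at t : valley
  have hdec : ω (P 1) (P 2) < ω (P 0) (P 1) := by
    rw [hP0, hPs 0 (by omega), hPs 1 (by omega), hq0]
    have hGSadj : (GSgraph G ω Cᶜ).Adj (W.getVert 0) (W.getVert 1) :=
      W.adj_getVert_succ (by omega)
    rw [hq0] at hGSadj
    have h1 : ω x (W.getVert 1) < nuWt G ω Cᶜ x := hGSadj.2.2.2.1 hx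
    rw [hsym z1 x, hz1nu]
    exact h1
  have hconc := no_valley hsym hG hsp (i := 0) (j := t) (by omega) (by omega) hdec
  rw [hPs t le_rfl, hqt, hPl] at hconc
  have ea : t = (t - 1) + 1 := by omega
  rw [ea, hPs (t - 1) (by omega)] at hconc
  -- hconc : ω y z2 ≤ ω (q (t-1)) y
  have hGSadj : (GSgraph G ω Cᶜ).Adj (W.getVert (t - 1)) (W.getVert t) := by
    have := W.adj_getVert_succ (i := t - 1) (by omega)
    have e : t - 1 + 1 = t := by omega
    rwa [e] at this
  rw [hqt] at hGSadj
  have h2 : ω y (W.getVert (t - 1)) < nuWt G ω Cᶜ y := hGSadj.2.2.2.2 hy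
  rw [hsym (W.getVert (t - 1)) y, hz2nu] at hconc
  omega



lemma reachable_induce {H : SimpleGraph V} {s : Set V}
    (hcl : ∀ {a b : V}, H.Adj a b → a ∈ s → b ∈ s) :
    ∀ {a b : V} (_ : H.Walk a b) (ha : a ∈ s) (hb : b ∈ s),
      (H.induce s).Reachable ⟨a, ha⟩ ⟨b, hb⟩ := by
  intro a b W
  induction W with
  | nil => intro ha hb; exact Reachable.refl _
  | @cons a x b h q ih =>
      intro ha hb
      have hxs : x ∈ s := hcl h ha
      have hadj : (H.induce s).Adj ⟨a, ha⟩ ⟨x, hxs⟩ := h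
      exact hadj.reachable.trans (ih hxs hb)

lemma isTree_induce_component {H : SimpleGraph V} (hac : G.IsAcyclic)
    (hHG : ∀ a b, H.Adj a b → G.Adj a b) (c : H.ConnectedComponent) {x0 : V}
    (hx0 : x0 ∈ c.supp) : (H.induce c.supp).IsTree := by
  have hcl : ∀ {a b : V}, H.Adj a b → a ∈ c.supp → b ∈ c.supp := by
    intro a b h ha
    rw [SimpleGraph.ConnectedComponent.mem_supp_iff] at ha ⊢
    rw [← ha]
    exact SimpleGraph.ConnectedComponent.sound h.symm.reachable
  constructor
  · rw [SimpleGraph.connected_iff]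
    refine ⟨?_, ⟨⟨x0, hx0⟩⟩⟩
    intro u w
    have h1 : H.Reachable u.1 w.1 := by
      have hu := u.2
      have hw := w.2
      rw [SimpleGraph.ConnectedComponent.mem_supp_iff] at hu hw
      exact SimpleGraph.ConnectedComponent.exact (hu.trans hw.symm)
    obtain ⟨W⟩ := h1
    have := reachable_induce hcl W u.2 w.2
    simpa using this
  · intro u w hw
    let f : (H.induce c.supp) →g G :=
      ⟨fun a => a.1, fun {a b} h => hHG a.1 b.1 h⟩
    have hcyc : (w.map f).IsCycle :=
      (SimpleGraph.Walk.map_isCycle_iff_of_injective (f := f)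
        (fun a b hab => Subtype.ext hab)).mpr hw
    exact hac _ hcyc



/-- If `C` strong-reaches, witness paths exist from any non-neighbour cover vertex. -/
lemma witness_of_reach (hsym : ∀ a b, ω a b = ω b a) {w x : V}
    (hwn : w ∉ setNbhd G Cᶜ) (hx : x ∈ setNbhd G Cᶜ)
    (hreach : (GSgraph G ω Cᶜ).Reachable x w) :
    ∃ (p : ℕ → V) (m : ℕ), IsStrongWitnessPath G ω Cᶜ p m ∧ p 0 = w := by
  classical
  obtain ⟨W0⟩ := hreach.symm
  set W : (GSgraph G ω Cᶜ).Walk w x := W0.bypass with hW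
  have hWp : W.IsPath := W0.bypass_isPath
  set t : ℕ := W.length with htdef
  have hq : IsSimplePathOn (GSgraph G ω Cᶜ) W.getVert t := isSimplePathOn_getVert hWp
  have hq0 : W.getVert 0 = w := W.getVert_zero
  have hqt : W.getVert t = x := W.getVert_length
  have hQt : W.getVert t ∈ setNbhd G Cᶜ := by rw [hqt]; exact hx
  have hex : ∃ s, W.getVert s ∈ setNbhd G Cᶜ := ⟨t, hQt⟩
  set m := Nat.find hex with hm
  have hmem : W.getVert m ∈ setNbhd G Cᶜ := Nat.find_spec hex
  have hmin : ∀ s < m, W.getVert s ∉ setNbhd G Cᶜ := fun s hs => Nat.find_min hex hs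
  have hmt : m ≤ t := Nat.find_le hQt
  have hm1 : 1 ≤ m := by
    rcases Nat.eq_zero_or_pos m with h | h
    · exfalso; apply hwn; rw [← hq0, ← h]; exact hmem
    · exact h
  have hlast : (GSgraph G ω Cᶜ).Adj (W.getVert (m - 1)) (W.getVert m) := by
    have := W.adj_getVert_succ (i := m - 1) (by omega)
    have e : m - 1 + 1 = m := by omega
    rwa [e] at this
  refine ⟨W.getVert, m, ⟨⟨fun i hi j hj hij => IsPath.getVert_inj hWp i (by omega) j (by omega) hij,
    fun i hi => (hq.2 i (by omega)).1⟩, hm1, hmin, hmem, ?_⟩, hq0⟩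
  have h2 := hlast.2.2.2.2 hmem
  rwa [hsym] at h2

/-- counting a disjoint union over `Fin k`. -/
lemma ncard_iUnion_fin [Fintype V] {k : ℕ} (f : Fin k → Set V)
    (hdisj : ∀ i j, i ≠ j → Disjoint (f i) (f j)) :
    (⋃ i, f i).ncard = ∑ i, (f i).ncard := by
  classical
  have hfin : ∀ i, (f i).Finite := fun i => Set.toFinite _
  have hU : (⋃ i, f i).Finite := Set.toFinite _
  rw [Set.ncard_eq_toFinset_card _ hU]
  have he : hU.toFinset = Finset.univ.biUnion (fun i => (hfin i).toFinset) := by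
    ext x
    simp only [Set.Finite.mem_toFinset, Finset.mem_biUnion, Finset.mem_univ, true_and]
    exact Set.mem_iUnion
  rw [he, Finset.card_biUnion]
  · exact Finset.sum_congr rfl fun i _ => ((Set.ncard_eq_toFinset_card _ (hfin i))).symm
  · intro i _ j _ hij
    rw [Function.onFun, Finset.disjoint_left]
    intro a hai haj
    rw [Set.Finite.mem_toFinset] at hai haj
    exact (hdisj i j hij).le_bot ⟨hai, haj⟩



lemma increasing_component [Fintype V] (hsym : ∀ a b, ω a b = ω b a)
    (hG : IsIncreasingWeightedTree G ω v) {x : V} (hx : x ∈ setNbhd G Cᶜ)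
    {c : (GSgraph G ω Cᶜ).ConnectedComponent} (hxc : x ∈ c.supp)
    (q : ℕ → c.supp) (m : ℕ) (hq : IsSimplePathOn ((GSgraph G ω Cᶜ).induce c.supp) q m)
    (hend : q m = ⟨x, hxc⟩) : IsIncreasingPath (fun a b => ω a.1 b.1) q m := by
  intro t ht
  by_contra hle
  push_neg at hle
  set p : ℕ → V := fun s => (q s).1 with hpdef
  have hGS : ∀ s, s < m → (GSgraph G ω Cᶜ).Adj (p s) (p (s + 1)) := fun s hs => hq.2 s hs
  have hpm : p m = x := congrArg Subtype.val hend
  have hsp : IsSimplePathOn G p m :=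
    ⟨fun i hi j hj hij => hq.1 i hi j hj (Subtype.ext hij), fun i hi => (hGS i hi).1⟩
  have hnot : ∀ s ≤ m, p s ∉ (Cᶜ : Set V) := by
    intro s hs
    rcases eq_or_lt_of_le hs with h | h
    · rw [h, hpm]; exact hx.1
    · exact (hGS s h).2.1
  obtain ⟨z, hzS, hzadj, hznu⟩ := nu_spec (ω := ω) hx
  set P : ℕ → V := fun s => if s ≤ m then p s else z with hP
  have hPp : ∀ s ≤ m, P s = p s := fun s hs => by simp only [hP]; rw [if_pos hs]
  have hPz : P (m + 1) = z := by simp only [hP]; rw [if_neg (by omega)]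
  have hsp' : IsSimplePathOn G P (m + 1) := by
    constructor
    · intro a ha b hb hab
      by_cases hat : a ≤ m <;> by_cases hbt : b ≤ m
      · rw [hPp a hat, hPp b hbt] at hab
        exact hsp.1 a hat b hbt hab
      · have : b = m + 1 := by omega
        rw [hPp a hat, this, hPz] at hab
        exact absurd (hab ▸ hzS) (hnot a hat)
      · have : a = m + 1 := by omega
        rw [hPp b hbt, this, hPz] at hab
        exact absurd (hab.symm ▸ hzS) (hnot b hbt)
      · omega
    · intro s hs
      rcases Nat.lt_or_ge s m with h | h
      · rw [hPp s (by omega), hPp (s + 1) (by omega)]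
        exact (hGS s h).1
      · have : s = m := by omega
        rw [this, hPp m le_rfl, hPz, hpm]
        exact hzadj
  have hdec : ω (P (t + 1)) (P (t + 2)) < ω (P t) (P (t + 1)) := by
    rw [hPp t (by omega), hPp (t + 1) (by omega), hPp (t + 2) (by omega)]
    exact hle
  have hconc := no_valley hsym hG hsp' (i := t) (j := m - 1) (by omega) (by omega) hdec
  have e1 : m - 1 + 1 = m := by omega
  have e2 : m - 1 + 2 = m + 1 := by omega
  rw [e1, e2, hPz, hPp m le_rfl, hPp (m - 1) (by omega), hpm] at hconc
  -- hconc : ω x z ≤ ω (p (m-1)) x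
  have hlast := hGS (m - 1) (by omega)
  rw [e1, hpm] at hlast
  have h2 : ω x (p (m - 1)) < nuWt G ω Cᶜ x := hlast.2.2.2.2 hx
  rw [hznu] at hconc
  rw [hsym] at h2
  omega


end AuxSVC

/-- Lemma 1.9: let `C ≠ V(G)` be a vertex cover of the increasing weighted
tree `G_ω`, `S = V(G) ∖ C`, and `N_G(S) = {r 1, …, r k}`.  Then `C` is a strong vertex cover
of `G_ω` iff `G_S` has exactly `k` connected components `T^1, …, T^k` with `r i ∈ T^i`
(i.e. every vertex of `C` is reachable in `G_S` from some `r i`, and distinct `r i` lie in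
distinct components); moreover if `C` is strong, then each `(T^i_ω, r i)` is an increasing
weighted tree and `s(C) = ∑ i, s(r i, T^i_ω)`. -/
theorem strong_cover_iff_components {V : Type*} [Fintype V]
    (G : SimpleGraph V) (ω : V → V → ℕ)
    (hsym : ∀ a b, ω a b = ω b a) (hpos : ∀ a b, G.Adj a b → 0 < ω a b)
    (v : V) (hG : IsIncreasingWeightedTree G ω v)
    (C : Set V) (hC : IsVertexCoverOn G C) (hCne : C ≠ Set.univ)
    (k : ℕ) (r : Fin k → V) (hr : Function.Injective r)
    (hrange : Set.range r = setNbhd G Cᶜ) :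
    (IsStrongVertexCover G ω C ↔
      ((∀ x ∈ C, ∃ i : Fin k, (GSgraph G ω Cᶜ).Reachable (r i) x) ∧
        ∀ i j : Fin k, i ≠ j → ¬ (GSgraph G ω Cᶜ).Reachable (r i) (r j))) ∧
    (IsStrongVertexCover G ω C →
      (∀ i : Fin k,
        IsIncreasingWeightedTree
          ((GSgraph G ω Cᶜ).induce ((GSgraph G ω Cᶜ).connectedComponentMk (r i)).supp)
          (fun a b => ω a.1 b.1) ⟨r i, rfl⟩) ∧
      coverSpecialCount G ω C =
        ∑ i : Fin k,
          rootSpecialCount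
            ((GSgraph G ω Cᶜ).induce ((GSgraph G ω Cᶜ).connectedComponentMk (r i)).supp)
            (fun a b => ω a.1 b.1) ⟨r i, rfl⟩) := by
  classical
  have hri : ∀ i, r i ∈ setNbhd G Cᶜ := fun i => hrange ▸ Set.mem_range_self i
  have hdisj : ∀ i j : Fin k, i ≠ j → ¬ (GSgraph G ω Cᶜ).Reachable (r i) (r j) :=
    fun i j hij => AuxSVC.nbhd_not_reachable hsym hG (hri i) (hri j) (fun he => hij (hr he))
  have hreach_of_strong : IsStrongVertexCover G ω C →
      ∀ x ∈ C, ∃ i, (GSgraph G ω Cᶜ).Reachable (r i) x := by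
    intro hstrong x hxC
    by_cases hxn : x ∈ setNbhd G Cᶜ
    · rw [← hrange] at hxn
      obtain ⟨i, hi⟩ := hxn
      exact ⟨i, by rw [hi]⟩
    · rcases hstrong.2.2 with hmin | hpaths
      · exact absurd (AuxSVC.minimal_subset_nbhd hmin x hxC) hxn
      · obtain ⟨p, m, hw, hp0⟩ := hpaths x ⟨hxC, hxn⟩
        have hGSp := AuxSVC.witness_GS hsym hC hw
        have hre : (GSgraph G ω Cᶜ).Reachable (p 0) (p m) :=
          AuxSVC.reach_of_chain hGSp (by omega)
        have hpm : p m ∈ setNbhd G Cᶜ := hw.2.2.2.1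
        rw [← hrange] at hpm
        obtain ⟨i, hi⟩ := hpm
        refine ⟨i, ?_⟩
        rw [hi, ← hp0]
        exact hre.symm
  constructor
  · constructor
    · intro hstrong
      exact ⟨hreach_of_strong hstrong, hdisj⟩
    · rintro ⟨hreach, -⟩
      refine ⟨hC, hCne, Or.inr ?_⟩
      intro w hw
      obtain ⟨i, hir⟩ := hreach w hw.1
      exact AuxSVC.witness_of_reach hsym hw.2 (hri i) hir
  · intro hstrong
    constructor
    · intro i
      refine ⟨AuxSVC.isTree_induce_component hG.1.2
        (fun a b (h : (GSgraph G ω Cᶜ).Adj a b) => h.1)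
        ((GSgraph G ω Cᶜ).connectedComponentMk (r i)) (x0 := r i) rfl, ?_⟩
      intro q m hq _ hend
      exact AuxSVC.increasing_component hsym hG (hri i) rfl q m hq hend
    · -- the counting identity
      have key1 : {u | IsSpecialVertexOfCover G ω C u} =
          ⋃ i : Fin k, (Subtype.val ''
            {w | IsSpecialVertexOfRoot
              ((GSgraph G ω Cᶜ).induce ((GSgraph G ω Cᶜ).connectedComponentMk (r i)).supp)
              (fun a b => ω a.1 b.1) ⟨r i, rfl⟩ w}) := by
        ext u
        constructor
        · intro hu
          obtain ⟨p, m, hw, hp0mem, hm2, hp1, hww⟩ := hu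
          have hGSp := AuxSVC.witness_GS hsym hC hw
          have hpmN : p m ∈ setNbhd G Cᶜ := hw.2.2.2.1
          rw [← hrange] at hpmN
          obtain ⟨i, hi⟩ := hpmN
          refine Set.mem_iUnion.mpr ⟨i, ?_⟩
          have hmemb : ∀ s, s ≤ m →
              p s ∈ ((GSgraph G ω Cᶜ).connectedComponentMk (r i)).supp := by
            intro s hs
            rw [SimpleGraph.ConnectedComponent.mem_supp_iff, hi]
            exact SimpleGraph.ConnectedComponent.sound (AuxSVC.reach_of_chain hGSp hs)
          set q : ℕ → (((GSgraph G ω Cᶜ).connectedComponentMk (r i)).supp : Set V) :=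
            fun s => ⟨p (min s m), hmemb _ (min_le_right _ _)⟩ with hqdef
          have hqv : ∀ s, s ≤ m → (q s).1 = p s :=
            fun s hs => congrArg p (min_eq_left hs)
          have hqpath : IsSimplePathOn
              ((GSgraph G ω Cᶜ).induce ((GSgraph G ω Cᶜ).connectedComponentMk (r i)).supp)
              q m := by
            constructor
            · intro a ha b hb hab
              have hv : (q a).1 = (q b).1 := congrArg Subtype.val hab
              rw [hqv a ha, hqv b hb] at hv
              exact hw.1.1 a ha b hb hv
            · intro s hs
              have hadj : (GSgraph G ω Cᶜ).Adj (q s).1 (q (s + 1)).1 := by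
                rw [hqv s (by omega), hqv (s + 1) (by omega)]
                exact hGSp s hs
              exact hadj
          refine ⟨q 1, ⟨q, m, hqpath, hm2, ?_, rfl, ?_⟩, ?_⟩
          · exact Subtype.ext (by rw [hqv m le_rfl, ← hi])
          · show ω (q 0).1 (q 1).1 = ω (q 1).1 (q 2).1
            rw [hqv 0 (by omega), hqv 1 (by omega), hqv 2 (by omega)]
            exact hww
          · rw [hqv 1 (by omega)]
            exact hp1
        · intro hu
          rw [Set.mem_iUnion] at hu
          obtain ⟨i, w0, hw0, hval⟩ := hu
          obtain ⟨q, m, hq, hm2, hend, hq1, hww⟩ := hw0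
          set p : ℕ → V := fun s => (q s).1 with hpdef
          have hGSp : ∀ s, s < m → (GSgraph G ω Cᶜ).Adj (p s) (p (s + 1)) :=
            fun s hs => hq.2 s hs
          have hpm : p m = r i := congrArg Subtype.val hend
          have hnotS : ∀ s ≤ m, p s ∉ (Cᶜ : Set V) := by
            intro s hs
            rcases eq_or_lt_of_le hs with h | h
            · rw [h, hpm]; exact (hri i).1
            · exact (hGSp s h).2.1
          have hnotN : ∀ s, s < m → p s ∉ setNbhd G Cᶜ := by
            intro s hs hin
            rw [← hrange] at hin
            obtain ⟨j, hj⟩ := hin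
            have h1 : (GSgraph G ω Cᶜ).connectedComponentMk (p s) =
                (GSgraph G ω Cᶜ).connectedComponentMk (r i) := by
              have := (q s).2
              rwa [SimpleGraph.ConnectedComponent.mem_supp_iff] at this
            by_cases hji : j = i
            · have hpsm : p s = p m := by rw [hpm, ← hji, hj]
              have := hq.1 s (by omega) m le_rfl (Subtype.ext hpsm)
              omega
            · refine hdisj j i hji (SimpleGraph.ConnectedComponent.exact ?_)
              rw [hj, h1]
          have hlastmem : p m ∈ setNbhd G Cᶜ := by rw [hpm]; exact hri i
          have hlast : ω (p (m - 1)) (p m) < nuWt G ω Cᶜ (p m) := by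
            have hl := hGSp (m - 1) (by omega)
            have e : m - 1 + 1 = m := by omega
            rw [e] at hl
            have h2 := hl.2.2.2.2 hlastmem
            rwa [hsym] at h2
          have hwitness : IsStrongWitnessPath G ω Cᶜ p m :=
            ⟨⟨fun a ha b hb hab => hq.1 a ha b hb (Subtype.ext hab),
              fun s hs => (hGSp s hs).1⟩, by omega, hnotN, hlastmem, hlast⟩
          have hp0C : p 0 ∈ C := by
            have := hnotS 0 (by omega)
            simpa using this
          refine ⟨p, m, hwitness, ⟨hp0C, hnotN 0 (by omega)⟩, hm2, ?_, hww⟩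
          rw [← hval]
          exact congrArg Subtype.val hq1
      have key2 : ∀ i j : Fin k, i ≠ j →
          Disjoint
            (Subtype.val '' {w | IsSpecialVertexOfRoot
              ((GSgraph G ω Cᶜ).induce ((GSgraph G ω Cᶜ).connectedComponentMk (r i)).supp)
              (fun a b => ω a.1 b.1) ⟨r i, rfl⟩ w})
            (Subtype.val '' {w | IsSpecialVertexOfRoot
              ((GSgraph G ω Cᶜ).induce ((GSgraph G ω Cᶜ).connectedComponentMk (r j)).supp)
              (fun a b => ω a.1 b.1) ⟨r j, rfl⟩ w}) := by
        intro i j hij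
        rw [Set.disjoint_left]
        rintro a ⟨w1, -, hw1⟩ ⟨w2, -, hw2⟩
        have h1 := w1.2
        have h2 := w2.2
        rw [SimpleGraph.ConnectedComponent.mem_supp_iff] at h1 h2
        rw [hw1] at h1
        rw [hw2] at h2
        exact hdisj i j hij (SimpleGraph.ConnectedComponent.exact (h1.symm.trans h2))
      simp only [coverSpecialCount, rootSpecialCount]
      rw [key1, AuxSVC.ncard_iUnion_fin _ key2]
      exact Finset.sum_congr rfl fun i _ =>
        Set.ncard_image_of_injective _ Subtype.val_injective
end
end

section
/- Let G_ω be an increasing weighted tree with vertex set {x_1,…,x_n}, let I = I(G_ω) ⊆ R = K[x_1,…,x_n] be its weighted edge ideal, let S be a nonempty independent set of G, and let I[S] = (I : (∏_{x∈S} x)^∞) be the saturation of I with respect to the variables in S. Let T^1,…,T^k be the connected components of G_S meeting N_G(S), with V(T^i) ∩ N_G(S) = {r_i}, and T^{k+1},…,T^ℓ the remaining components. Then I[S] = Σ_{i=1}^k (r_i^{ν_S(r_i)}, I(T^i_ω)) + Σ_{i=k+1}^ℓ I(T^i_ω), where I(T^i_ω) = (0) if T^i consists of a single vertex. -/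
open SimpleGraph

noncomputable section

variable {V : Type*}

open MvPolynomial

/-- The weighted edge ideal `I(G_ω) = ((x_i x_j)^{ω(x_i x_j)} ∣ x_i x_j ∈ E(G))`. -/
def weightedEdgeIdeal (n : ℕ) (K : Type*) [Field K]
    (G : SimpleGraph (Fin n)) (ω : Fin n → Fin n → ℕ) : Ideal (MvPolynomial (Fin n) K) :=
  Ideal.span {f | ∃ i j : Fin n, G.Adj i j ∧ f = (X i * X j) ^ ω i j}

/-- The maximal graded ideal `𝔪 = (x_1, …, x_n)`. -/
def maxGradedIdeal (n : ℕ) (K : Type*) [Field K] : Ideal (MvPolynomial (Fin n) K) :=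
  Ideal.span (Set.range (X : Fin n → MvPolynomial (Fin n) K))

/-- `μ(x) = max { ω(xy) ∣ y ∈ N_G(x) }`. -/
def muWt (G : SimpleGraph V) (ω : V → V → ℕ) (x : V) : ℕ :=
  sSup {w | ∃ y, G.Adj x y ∧ w = ω x y}

/-- `I[W] = (I : (∏_{x ∈ W} x)^∞)`, the saturation of `I` with respect to the set of
variables `W`. -/
def satSet {n : ℕ} {K : Type*} [Field K] (I : Ideal (MvPolynomial (Fin n) K))
    (W : Finset (Fin n)) : Ideal (MvPolynomial (Fin n) K) :=
  ⨆ m : ℕ, I.colon (Ideal.span {(∏ x ∈ W, X x : MvPolynomial (Fin n) K) ^ m})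

/-- The weighted edge ideal of the connected component `c` of `H` (viewed as a weighted
subgraph): it is `(0)` when the component has no edges, e.g. for a trivial component. -/
def componentEdgeIdeal (n : ℕ) (K : Type*) [Field K] (H : SimpleGraph (Fin n))
    (ω : Fin n → Fin n → ℕ) (c : H.ConnectedComponent) : Ideal (MvPolynomial (Fin n) K) :=
  Ideal.span {f | ∃ i j : Fin n, H.Adj i j ∧ i ∈ c.supp ∧ f = (X i * X j) ^ ω i j}

namespace SatAux

variable {n : ℕ} {K : Type*} [Field K]

lemma XmulX_pow (i j : Fin n) (w : ℕ) :
    ((X i * X j : MvPolynomial (Fin n) K)) ^ w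
      = monomial (Finsupp.single i w + Finsupp.single j w) 1 := by
  rw [mul_pow, X_pow_eq_monomial, X_pow_eq_monomial, monomial_mul, one_mul]

lemma prod_X_pow (S : Finset (Fin n)) (m : ℕ) :
    (∏ x ∈ S, (X x : MvPolynomial (Fin n) K)) ^ m
      = monomial (∑ x ∈ S, Finsupp.single x m) 1 := by
  classical
  rw [← Finset.prod_pow]
  induction S using Finset.induction_on with
  | empty => simp
  | insert _ _ h ih =>
      rw [Finset.prod_insert h, Finset.sum_insert h, ih, X_pow_eq_monomial,
        monomial_mul, one_mul]

lemma sigma_apply (S : Finset (Fin n)) (m : ℕ) (t : Fin n) :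
    (∑ x ∈ S, Finsupp.single x m) t = if t ∈ S then m else 0 := by
  classical
  rw [Finset.sum_apply']
  simp [Finsupp.single_apply]

end SatAux

/-- the decomposition `(§)` in the proof of Theorem 2.12: for an
increasing weighted tree `G_ω` and a nonempty independent set `S`, the saturation `I[S]`
decomposes as `Σ_{i=1}^k (r_i^{ν_S(r_i)}, I(T^i_ω)) + Σ_{i=k+1}^ℓ I(T^i_ω)`, where
`T^1, …, T^k` are the components of `G_S` meeting `N_G(S)`, with
`V(T^i) ∩ N_G(S) = {r_i}`, and the remaining summands range over the other components. -/
theorem saturation_decomposition {n : ℕ} (K : Type*) [Field K]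
    (G : SimpleGraph (Fin n)) (ω : Fin n → Fin n → ℕ)
    (hsym : ∀ a b, ω a b = ω b a) (hpos : ∀ a b, G.Adj a b → 0 < ω a b)
    (v : Fin n) (hG : IsIncreasingWeightedTree G ω v)
    (S : Finset (Fin n)) (hSne : S.Nonempty) (hS : IsIndepSetOn G ↑S)
    (k : ℕ) (r : Fin k → Fin n) (hr : Function.Injective r)
    (hrange : Set.range r = setNbhd G ↑S)
    (hcomp : ∀ i : Fin k,
      ((GSgraph G ω ↑S).connectedComponentMk (r i)).supp ∩ setNbhd G ↑S = {r i}) :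
    satSet (weightedEdgeIdeal n K G ω) S =
      (⨆ i : Fin k,
        (Ideal.span {(X (r i) : MvPolynomial (Fin n) K) ^ nuWt G ω ↑S (r i)} ⊔
          componentEdgeIdeal n K (GSgraph G ω ↑S) ω
            ((GSgraph G ω ↑S).connectedComponentMk (r i)))) ⊔
      ⨆ c ∈ {c : (GSgraph G ω ↑S).ConnectedComponent |
          ∀ i : Fin k, c ≠ (GSgraph G ω ↑S).connectedComponentMk (r i)},
        componentEdgeIdeal n K (GSgraph G ω ↑S) ω c := by
  classical
  set DB : Set (Fin n →₀ ℕ) :=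
    ({d | ∃ u z, u ∉ S ∧ z ∈ S ∧ G.Adj u z ∧ d = Finsupp.single u (ω u z)} ∪
     {d | ∃ a b, G.Adj a b ∧ a ∉ S ∧ b ∉ S ∧
        d = Finsupp.single a (ω a b) + Finsupp.single b (ω a b)}) with hDB
  set J : Ideal (MvPolynomial (Fin n) K) :=
    Ideal.span ((fun s => MvPolynomial.monomial s (1 : K)) '' DB) with hJ
  have hI : weightedEdgeIdeal n K G ω =
      Ideal.span ((fun s => MvPolynomial.monomial s (1 : K)) ''
        {d | ∃ i j, G.Adj i j ∧
          d = Finsupp.single i (ω i j) + Finsupp.single j (ω i j)}) := by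
    unfold weightedEdgeIdeal
    congr 1
    ext f
    constructor
    · rintro ⟨i, j, hij, rfl⟩
      exact ⟨_, ⟨i, j, hij, rfl⟩, (SatAux.XmulX_pow i j _).symm⟩
    · rintro ⟨d, ⟨i, j, hij, rfl⟩, rfl⟩
      exact ⟨i, j, hij, (SatAux.XmulX_pow i j _).symm⟩
  have hJsat : satSet (weightedEdgeIdeal n K G ω) S = J := by
    apply le_antisymm
    · refine iSup_le fun m => ?_
      intro f hf
      rw [Ideal.mem_colon_span_singleton, hI,
        MvPolynomial.mem_ideal_span_monomial_image] at hf
      rw [hJ, MvPolynomial.mem_ideal_span_monomial_image]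
      intro x hx
      have hxσ : x + (∑ y ∈ S, Finsupp.single y m) ∈
          (f * (∏ y ∈ S, MvPolynomial.X y) ^ m).support := by
        rw [SatAux.prod_X_pow, MvPolynomial.mem_support_iff,
          MvPolynomial.coeff_mul_monomial, mul_one]
        exact MvPolynomial.mem_support_iff.mp hx
      obtain ⟨e, ⟨i, j, hij, rfl⟩, hle⟩ := hf _ hxσ
      have hne : i ≠ j := hij.ne
      have hlei := Finsupp.le_def.mp hle i
      have hlej := Finsupp.le_def.mp hle j
      simp only [Finsupp.add_apply, Finsupp.single_apply, SatAux.sigma_apply,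
        if_pos rfl, if_neg hne, if_neg hne.symm, zero_add, add_zero] at hlei hlej
      by_cases hiS : i ∈ S
      · have hjS : j ∉ S := fun hjS =>
          hS i (by simpa using hiS) j (by simpa using hjS) hij
        refine ⟨Finsupp.single j (ω j i), Or.inl ⟨j, i, hjS, hiS, hij.symm, rfl⟩, ?_⟩
        rw [Finsupp.single_le_iff, hsym j i]
        simpa [hjS] using hlej
      · by_cases hjS : j ∈ S
        · refine ⟨Finsupp.single i (ω i j), Or.inl ⟨i, j, hiS, hjS, hij, rfl⟩, ?_⟩
          rw [Finsupp.single_le_iff]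
          simpa [hiS] using hlei
        · refine ⟨_, Or.inr ⟨i, j, hij, hiS, hjS, rfl⟩, Finsupp.le_def.mpr fun t => ?_⟩
          rcases eq_or_ne t i with rfl | hti
          · simpa [Finsupp.single_apply, hne.symm, hiS] using hlei
          · rcases eq_or_ne t j with rfl | htj
            · simpa [Finsupp.single_apply, hne, hjS] using hlej
            · simp [Finsupp.single_apply, hti.symm, htj.symm]
    · rw [hJ]
      refine Ideal.span_le.mpr ?_
      rintro f ⟨d, hd, rfl⟩
      rcases hd with ⟨u, z, huS, hzS, huz, rfl⟩ | ⟨a, b, hab, haS, hbS, rfl⟩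
      · dsimp only
        refine SetLike.mem_coe.mpr (Submodule.mem_iSup_of_mem (ω u z) ?_)
        rw [Ideal.mem_colon_span_singleton, ← MvPolynomial.X_pow_eq_monomial,
          ← Finset.prod_pow, ← Finset.mul_prod_erase S _ hzS]
        have hre : (MvPolynomial.X u : MvPolynomial (Fin n) K) ^ (ω u z) *
            ((MvPolynomial.X z) ^ (ω u z) *
              ∏ x ∈ S.erase z, (MvPolynomial.X x) ^ (ω u z))
            = (MvPolynomial.X u * MvPolynomial.X z) ^ (ω u z) *
              ∏ x ∈ S.erase z, (MvPolynomial.X x) ^ (ω u z) := by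
          rw [mul_pow]; ring
        rw [hre]
        exact Ideal.mul_mem_right _ _ (Ideal.subset_span ⟨u, z, huz, rfl⟩)
      · dsimp only
        refine SetLike.mem_coe.mpr (Submodule.mem_iSup_of_mem 0 ?_)
        rw [Ideal.mem_colon_span_singleton, pow_zero, mul_one]
        exact Ideal.subset_span ⟨a, b, hab, (SatAux.XmulX_pow a b _).symm⟩
  rw [hJsat]
  apply le_antisymm
  · rw [hJ]
    refine Ideal.span_le.mpr ?_
    rintro f ⟨d, hd, rfl⟩
    dsimp only
    rcases hd with ⟨u, z, huS, hzS, huz, rfl⟩ | ⟨a, b, hab, haS, hbS, rfl⟩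
    · have huN : u ∈ setNbhd G ↑S :=
        ⟨by simpa using huS, z, by simpa using hzS, huz⟩
      have hru : u ∈ Set.range r := by rw [hrange]; exact huN
      obtain ⟨i, hi⟩ := hru
      have hνle : nuWt G ω ↑S u ≤ ω u z :=
        Nat.sInf_le ⟨z, by simpa using hzS, huz, rfl⟩
      have hmem : (MvPolynomial.monomial (Finsupp.single u (ω u z)) (1 : K))
          ∈ Ideal.span {(MvPolynomial.X (r i) : MvPolynomial (Fin n) K)
              ^ nuWt G ω ↑S (r i)} := by
        rw [← MvPolynomial.X_pow_eq_monomial, hi, Ideal.mem_span_singleton]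
        exact pow_dvd_pow _ hνle
      exact SetLike.mem_coe.mpr (Submodule.mem_sup_left
        (Submodule.mem_iSup_of_mem i (Submodule.mem_sup_left hmem)))
    · by_cases hGS : (GSgraph G ω ↑S).Adj a b
      · have hmem : (MvPolynomial.monomial
            (Finsupp.single a (ω a b) + Finsupp.single b (ω a b)) (1 : K))
            ∈ componentEdgeIdeal n K (GSgraph G ω ↑S) ω
                ((GSgraph G ω ↑S).connectedComponentMk a) :=
          Ideal.subset_span ⟨a, b, hGS,
            (SimpleGraph.ConnectedComponent.mem_supp_iff _ _).mpr rfl,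
            (SatAux.XmulX_pow a b _).symm⟩
        by_cases hex : ∃ i, (GSgraph G ω ↑S).connectedComponentMk a
            = (GSgraph G ω ↑S).connectedComponentMk (r i)
        · obtain ⟨i, hi⟩ := hex
          rw [hi] at hmem
          exact SetLike.mem_coe.mpr (Submodule.mem_sup_left
            (Submodule.mem_iSup_of_mem i (Submodule.mem_sup_right hmem)))
        · push_neg at hex
          exact SetLike.mem_coe.mpr (Submodule.mem_sup_right
            (Submodule.mem_iSup_of_mem _ (Submodule.mem_iSup_of_mem hex hmem)))
      · have hnc : ¬((a ∈ setNbhd G ↑S → ω a b < nuWt G ω ↑S a) ∧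
            (b ∈ setNbhd G ↑S → ω b a < nuWt G ω ↑S b)) := by
          intro h
          exact hGS ⟨hab, by simpa using haS, by simpa using hbS, h.1, h.2⟩
        rw [not_and_or] at hnc
        rcases hnc with h | h
        · push_neg at h
          obtain ⟨haN, hge⟩ := h
          have hra : a ∈ Set.range r := by rw [hrange]; exact haN
          obtain ⟨i, hi⟩ := hra
          have hmem : (MvPolynomial.monomial
              (Finsupp.single a (ω a b) + Finsupp.single b (ω a b)) (1 : K))
              ∈ Ideal.span {(MvPolynomial.X (r i) : MvPolynomial (Fin n) K)
                  ^ nuWt G ω ↑S (r i)} := by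
            rw [← SatAux.XmulX_pow, hi, Ideal.mem_span_singleton, mul_pow]
            exact dvd_mul_of_dvd_left (pow_dvd_pow _ hge) _
          exact SetLike.mem_coe.mpr (Submodule.mem_sup_left
            (Submodule.mem_iSup_of_mem i (Submodule.mem_sup_left hmem)))
        · push_neg at h
          obtain ⟨hbN, hge⟩ := h
          have hrb : b ∈ Set.range r := by rw [hrange]; exact hbN
          obtain ⟨i, hi⟩ := hrb
          have hge' : nuWt G ω ↑S b ≤ ω a b := hge.trans (le_of_eq (hsym b a))
          have hmem : (MvPolynomial.monomial
              (Finsupp.single a (ω a b) + Finsupp.single b (ω a b)) (1 : K))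
              ∈ Ideal.span {(MvPolynomial.X (r i) : MvPolynomial (Fin n) K)
                  ^ nuWt G ω ↑S (r i)} := by
            rw [← SatAux.XmulX_pow, hi, Ideal.mem_span_singleton, mul_pow]
            exact dvd_mul_of_dvd_right (pow_dvd_pow _ hge') _
          exact SetLike.mem_coe.mpr (Submodule.mem_sup_left
            (Submodule.mem_iSup_of_mem i (Submodule.mem_sup_left hmem)))
  · have hcompJ : ∀ c : (GSgraph G ω ↑S).ConnectedComponent,
        componentEdgeIdeal n K (GSgraph G ω ↑S) ω c ≤ J := by
      intro c
      refine Ideal.span_le.mpr ?_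
      rintro f ⟨a, b, hab, -, rfl⟩
      obtain ⟨hGab, haS, hbS, -, -⟩ := hab
      rw [hJ, SetLike.mem_coe]
      exact Ideal.subset_span ⟨_, Or.inr ⟨a, b, hGab, by simpa using haS,
        by simpa using hbS, rfl⟩, (SatAux.XmulX_pow a b _).symm⟩
    refine sup_le (iSup_le fun i => sup_le ?_ (hcompJ _))
      (iSup_le fun c => iSup_le fun _ => hcompJ c)
    rw [Ideal.span_le, Set.singleton_subset_iff]
    have hri : r i ∈ setNbhd G ↑S := by rw [← hrange]; exact ⟨i, rfl⟩
    obtain ⟨hriS, z, hz, hadj⟩ := hri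
    have hnu : nuWt G ω ↑S (r i) ∈
        {w | ∃ z ∈ (↑S : Set (Fin n)), G.Adj (r i) z ∧ w = ω (r i) z} :=
      Nat.sInf_mem ⟨ω (r i) z, z, hz, hadj, rfl⟩
    obtain ⟨z0, hz0, hadj0, hv0⟩ := hnu
    rw [SetLike.mem_coe, hJ, MvPolynomial.X_pow_eq_monomial]
    exact Ideal.subset_span ⟨_, Or.inl ⟨r i, z0, by simpa using hriS,
      by simpa using hz0, hadj0, by rw [hv0]⟩, rfl⟩
end
end
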